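/- For integers 0 < n < L and α, β ∈ (0,1] with α ≠ β, the partition function decomposes as Z^{α,β}(L,n) = (αβ/(α−β)) · (R(L,n,β) − R(L,n,α)), where R(L,n,x) = Σ_{k=0}^{L−n} C^{L+n−1}_{L−n−k} · x^{−(k+1)}. -/

import Mathlib

open scoped BigOperators Classical
open Filter Topology

noncomputable section

namespace TASEP

/-- The matrix `X₀`: ones on the diagonal and the subdiagonal. -/
def X0 : ℕ → ℕ → ℝ := fun i k => if k = i ∨ k + 1 = i then 1 else 0

/-- The matrix `X₁`: ones on the diagonal and the superdiagonal. -/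
def X1 : ℕ → ℕ → ℝ := fun i k => if k = i ∨ k = i + 1 then 1 else 0

/-- The matrix `X₂`: a single one in the `(0,0)` entry. -/
def X2 : ℕ → ℕ → ℝ := fun i k => if i = 0 ∧ k = 0 then 1 else 0

/-- The matrix associated to a species label (`0` = hole, `1` = first class
particle, `2` = second class particle). -/
def Xmat : Fin 3 → ℕ → ℕ → ℝ
  | 0 => X0
  | 1 => X1
  | 2 => X2

/-- Product of two infinite matrices (well defined here since the relevant
matrices have finitely many nonzero entries in each row and column). -/
def mul (A B : ℕ → ℕ → ℝ) : ℕ → ℕ → ℝ := fun i k => ∑' j, A i j * B j k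

/-- The row vector `⟨W_α|`, with `i`-th entry `((1-α)/α)^i`. -/
def W (α : ℝ) : ℕ → ℝ := fun i => ((1 - α) / α) ^ i

/-- The column vector `|V_β⟩`, with `i`-th entry `((1-β)/β)^i`. -/
def V (β : ℝ) : ℕ → ℝ := fun i => ((1 - β) / β) ^ i

/-- Row vector times matrix. -/
def rowMul (v : ℕ → ℝ) (A : ℕ → ℕ → ℝ) : ℕ → ℝ := fun k => ∑' i, v i * A i k

/-- Matrix times column vector. -/
def colMul (A : ℕ → ℕ → ℝ) (v : ℕ → ℝ) : ℕ → ℝ := fun i => ∑' k, A i k * v k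

/-- Row vector times a word of matrices. -/
def rowWord (v : ℕ → ℝ) : List (Fin 3) → ℕ → ℝ
  | [] => v
  | a :: rest => rowWord (rowMul v (Xmat a)) rest

/-- Matrix element `⟨v| X_{σ₁} ⋯ X_{σ_p} |w⟩` of a word of matrices. -/
def pairing (v : ℕ → ℝ) (word : List (Fin 3)) (w : ℕ → ℝ) : ℝ :=
  ∑' i, rowWord v word i * w i

/-- Weight `w^{α,β}(τ) = ⟨W_α| X_{τ₁} ⋯ X_{τ_L} |V_β⟩` of a configuration. -/
def wt (α β : ℝ) {L : ℕ} (τ : Fin L → Fin 3) : ℝ :=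
  pairing (W α) (List.ofFn τ) (V β)

/-- Number of second class particles in a configuration. -/
def numTwos {L : ℕ} (τ : Fin L → Fin 3) : ℕ :=
  (Finset.univ.filter fun i => τ i = 2).card

/-- `Y L n`: configurations of length `L` with exactly `n` second class particles. -/
def Y (L n : ℕ) : Finset (Fin L → Fin 3) :=
  Finset.univ.filter fun τ => numTwos τ = n

/-- The partition function `Z^{α,β}(L,n)`. -/
def Z (α β : ℝ) (L n : ℕ) : ℝ := ∑ τ ∈ Y L n, wt α β τ

/-- Value of a configuration at the 1-based site `s` (defaulting to `0` off the lattice). -/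
def val {L : ℕ} (τ : Fin L → Fin 3) (s : ℕ) : Fin 3 :=
  if h : 1 ≤ s ∧ s ≤ L then τ ⟨s - 1, by omega⟩ else 0

/-- `E α β L n r sites j` is `E_r(L,n;i₁,…,i_r;j)`: the sum of weights of
configurations in `Y L n` with a first class particle at each of the sites
`i₁,…,i_{r-1}` and a block of `j` consecutive first class particles starting
at site `i_r`. -/
def E (α β : ℝ) (L n r : ℕ) (sites : Fin r → ℕ) (j : ℕ) : ℝ :=
  ∑ τ ∈ (Y L n).filter (fun τ =>
      (∀ m : Fin r, (m : ℕ) + 1 ≠ r → val τ (sites m) = 1) ∧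
      (∀ m : Fin r, (m : ℕ) + 1 = r → ∀ t ∈ Finset.range j, val τ (sites m + t) = 1)),
    wt α β τ

end TASEP

namespace TASEP

/-- The Catalan triangle numbers `C^m_n = binom(m+n,n)·(m−n+1)/(m+1)`. -/
def catC (m n : ℕ) : ℝ := ((m + n).choose n : ℝ) * ((m : ℝ) - (n : ℝ) + 1) / ((m : ℝ) + 1)

/-- The constants `c_{j,k}`: `c_{j,k} = C^{k−1}_{k−j}` for `j ≥ 1` and
`c_{0,k} = δ_{k,0}`. -/
def cCoeff (j k : ℕ) : ℝ :=
  if j = 0 then (if k = 0 then 1 else 0) else catC (k - 1) (k - j)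

/-- The constants `d_{m,j,k}`: for `j ≤ m`,
`d_{m,j,k} = binom(m−j+k,k) − binom(m−j+k,k−j)` (the second binomial taken to
be `0` when `k < j`), and `d_{m,m+1,k} = δ_{k,0}`. -/
def dCoeff (m j k : ℕ) : ℝ :=
  if j ≤ m then
    ((m - j + k).choose k : ℝ) - (if j ≤ k then ((m - j + k).choose (k - j) : ℝ) else 0)
  else if k = 0 then 1 else 0

end TASEP

namespace TASEP

/-- `R(L,n,x) = Σ_{k=0}^{L−n} C^{L+n−1}_{L−n−k} x^{−(k+1)}`. -/
def R (L n : ℕ) (x : ℝ) : ℝ :=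
  ∑ k ∈ Finset.range (L - n + 1), catC (L + n - 1) (L - n - k) * (x ^ (k + 1))⁻¹


/-- Ballot numbers: `F m i = catC m (m-i)` for `i ≤ m`, and `0` otherwise. -/
def F (m i : ℕ) : ℝ :=
  if i ≤ m then ((2*m - i).choose m : ℝ) - ((2*m - i).choose (m+1) : ℝ) else 0

lemma F_self (m : ℕ) : F m m = 1 := by
  rw [F, if_pos le_rfl]
  have : 2*m - m = m := by omega
  rw [this, Nat.choose_self, Nat.choose_eq_zero_of_lt (by omega)]
  norm_num

lemma F_of_gt {m i : ℕ} (h : m < i) : F m i = 0 := by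
  simp [F, Nat.not_le.mpr h]

lemma F_zero_one : F 0 1 = 0 := F_of_gt (by omega)

/-- Pascal-type recurrence. -/
lemma F_rec (m i : ℕ) (hi : 1 ≤ i) : F (m+1) i = F m (i-1) + F (m+1) (i+1) := by
  rcases Nat.lt_or_ge (m+1) i with h | h
  · rw [F_of_gt h, F_of_gt (by omega), F_of_gt (by omega)]; ring
  rcases Nat.eq_or_lt_of_le h with h1 | h1
  · -- i = m+1
    subst h1
    have e : m + 1 - 1 = m := by omega
    rw [e, F_self, F_self, F_of_gt (by omega)]; ring
  · -- i ≤ m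
    have him : i ≤ m := by omega
    have e1 : 2*(m+1) - i = (2*m + 1 - i) + 1 := by omega
    have e2 : 2*m - (i-1) = 2*m + 1 - i := by omega
    have e3 : 2*(m+1) - (i+1) = 2*m + 1 - i := by omega
    rw [F, F, F, if_pos (by omega), if_pos (by omega), if_pos (by omega), e1, e2, e3]
    rw [Nat.choose_succ_succ (2*m+1-i) m, Nat.choose_succ_succ (2*m+1-i) (m+1)]
    push_cast
    ring

lemma F_zero_eq_one (m : ℕ) : F (m+1) 0 = F (m+1) 1 := by
  have e1 : 2*(m+1) - 0 = (2*m+1) + 1 := by omega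
  have e2 : 2*(m+1) - 1 = 2*m+1 := by omega
  rw [F, F, if_pos (by omega), if_pos (by omega), e1, e2]
  rw [Nat.choose_succ_succ (2*m+1) m, Nat.choose_succ_succ (2*m+1) (m+1)]
  have hsymm : (2*m+1).choose m = (2*m+1).choose (m+1) := by
    have := Nat.choose_symm (n := 2*m+1) (k := m+1) (by omega)
    have e : 2*m+1 - (m+1) = m := by omega
    rw [e] at this
    omega
  push_cast [hsymm]
  ring

/-- variant valid for all m ≥ 1 -/
lemma F_rec' (m i : ℕ) (hm : 1 ≤ m) (hi : 1 ≤ i) : F m i = F (m-1) (i-1) + F m (i+1) := by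
  obtain ⟨m', rfl⟩ : ∃ m', m = m' + 1 := ⟨m - 1, by omega⟩
  have : m' + 1 - 1 = m' := by omega
  rw [this, F_rec m' i hi]

lemma F_zero_eq_one' (m : ℕ) (hm : 1 ≤ m) : F m 0 = F m 1 := by
  obtain ⟨m', rfl⟩ : ∃ m', m = m' + 1 := ⟨m - 1, by omega⟩
  exact F_zero_eq_one m'



lemma keyId (k m j : ℕ) :
    F (m+1+k) (k+j) = (if 1 ≤ j then F m (j-1) else 0)
      + (∑ i ∈ Finset.Icc 1 k, F (m+i) (i+j)) + F (m+k+1) (k+j+1) := by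
  induction k with
  | zero =>
    rw [Finset.Icc_eq_empty (by omega), Finset.sum_empty]
    rcases Nat.eq_zero_or_pos j with hj | hj
    · subst hj
      rw [if_neg (by omega)]
      simpa using F_zero_eq_one m
    · rw [if_pos (show 1 ≤ j from hj)]
      have := F_rec m j hj
      simpa using this
  | succ k ih =>
    have hrec : F (m+k+2) (k+1+j) = F (m+k+1) (k+j) + F (m+k+2) (k+j+2) := by
      have := F_rec (m+k+1) (k+1+j) (by omega)
      have e1 : k+1+j-1 = k+j := by omega
      have e2 : k+1+j+1 = k+j+2 := by omega
      rw [e1, e2] at this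
      convert this using 2 <;> omega
    have hsum : (∑ i ∈ Finset.Icc 1 (k+1), F (m+i) (i+j))
        = (∑ i ∈ Finset.Icc 1 k, F (m+i) (i+j)) + F (m+k+1) (k+1+j) := by
      rw [Finset.sum_Icc_succ_top (by omega), show m+(k+1) = m+k+1 by omega]
    have e3 : m+1+(k+1) = m+k+2 := by omega
    have e4 : k+1+j = k+(j+1) := by omega
    have e5 : m+(k+1)+1 = m+k+2 := by omega
    have e6 : k+1+j+1 = k+j+2 := by omega
    rw [e3, hsum, e5, e6]
    have e7 : (k+1)+j = k+1+j := rfl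
    rw [show k+1+j = k+j+1 by omega] at hrec ⊢
    rw [show m+1+k = m+k+1 from by omega] at ih
    linarith [ih]

/-- Row sums over `Ico`. -/
lemma F_sum_Ico : ∀ d s m, m + 1 ≤ s + d →
    (∑ t ∈ Finset.Ico s (m+1), F m t) = F (m+1) (s+1) := by
  intro d
  induction d with
  | zero =>
    intro s m h
    rw [Finset.Ico_eq_empty (by omega), Finset.sum_empty, F_of_gt (by omega)]
  | succ d ih =>
    intro s m h
    rcases Nat.lt_or_ge s (m+1) with hs | hs
    · rw [Finset.sum_eq_sum_Ico_succ_bot hs, ih (s+1) m (by omega),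
        F_rec m (s+1) (by omega), show s+1-1 = s by omega, show s+1+1 = s+2 by omega]
    · rw [Finset.Ico_eq_empty (by omega), Finset.sum_empty, F_of_gt (by omega)]



lemma F_sum_range (m : ℕ) : (∑ i ∈ Finset.range (m+1), F m i) = F (m+1) 1 := by
  have h := F_sum_Ico (m+1) 0 m (by omega)
  rw [Finset.range_eq_Ico]
  simpa using h

lemma conv_big {N r : ℕ} (s : ℕ) (h : N + 1 ≤ r) :
    (∑ m ∈ Finset.range (N+1), F m r * F (N-m) s) = F (N+1) (r+s+1) := by
  rw [Finset.sum_eq_zero, F_of_gt (by omega)]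
  intro m hm
  rw [F_of_gt (by simp at hm; omega), zero_mul]

lemma conv : ∀ N r s : ℕ,
    (∑ m ∈ Finset.range (N+1), F m r * F (N-m) s) = F (N+1) (r+s+1) := by
  intro N
  induction N with
  | zero =>
    intro r s
    rw [Finset.sum_range_one]
    rcases Nat.eq_zero_or_pos (r + s) with h | h
    · have hr : r = 0 := by omega
      have hs : s = 0 := by omega
      subst hr; subst hs
      have h00 : F 0 (0:ℕ) = 1 := by norm_num [F]
      have h11 : F 1 1 = 1 := F_self 1
      norm_num [h00, h11]
    · rw [F_of_gt (show 1 < r+s+1 by omega)]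
      rcases Nat.eq_zero_or_pos r with h0 | h0
      · subst h0; rw [F_of_gt (show 0 < s by omega), mul_zero]
      · rw [F_of_gt h0, zero_mul]
  | succ N ih =>
    intro r s
    have inner : ∀ d, ∀ r, N + 2 ≤ r + d →
        (∑ m ∈ Finset.range (N+2), F m r * F (N+1-m) s) = F (N+2) (r+s+1) := by
      intro d
      induction d with
      | zero =>
        intro r hr
        exact conv_big s (by omega)
      | succ d ihd =>
        intro r hr
        rcases Nat.lt_or_ge r (N+2) with hrN | hrN
        swap
        · exact conv_big s (by omega)
        rcases Nat.eq_zero_or_pos r with h0 | h0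
        · -- r = 0
          subst h0
          rw [Finset.sum_range_succ']
          have e1 : ∀ i ∈ Finset.range (N+1), F (i+1) 0 * F (N+1-(i+1)) s
              = F (i+1) 1 * F (N+1-(i+1)) s := by
            intro i _; rw [F_zero_eq_one i]
          rw [Finset.sum_congr rfl e1]
          have e2 : (∑ i ∈ Finset.range (N+1), F (i+1) 1 * F (N+1-(i+1)) s)
              = ∑ m ∈ Finset.range (N+2), F m 1 * F (N+1-m) s := by
            conv_rhs => rw [Finset.sum_range_succ']
            simp [F_zero_one]
          rw [e2, ihd 1 (by omega)]
          have hF : F 0 0 = 1 := by simp [F]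
          rw [hF, one_mul]
          have := F_rec (N+1) (s+1) (by omega)
          rw [show s+1-1 = s by omega] at this
          rw [show N+1-0 = N+1 by omega, show (0:ℕ)+s+1 = s+1 by omega, this]
          ring
        · -- r ≥ 1
          rw [Finset.sum_range_succ']
          rw [F_of_gt (show 0 < r from h0), zero_mul, add_zero]
          have e1 : ∀ i ∈ Finset.range (N+1), F (i+1) r * F (N+1-(i+1)) s
              = F i (r-1) * F (N-i) s + F (i+1) (r+1) * F (N-i) s := by
            intro i _
            rw [show N+1-(i+1) = N-i by omega, F_rec i r h0, add_mul]
          rw [Finset.sum_congr rfl e1, Finset.sum_add_distrib]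
          have first : (∑ i ∈ Finset.range (N+1), F i (r-1) * F (N-i) s)
              = F (N+1) (r+s) := by
            rw [ih (r-1) s, show r-1+s+1 = r+s by omega]
          have second : (∑ i ∈ Finset.range (N+1), F (i+1) (r+1) * F (N-i) s)
              = F (N+2) (r+s+2) := by
            have e2 : (∑ i ∈ Finset.range (N+1), F (i+1) (r+1) * F (N-i) s)
                = ∑ m ∈ Finset.range (N+2), F m (r+1) * F (N+1-m) s := by
              conv_rhs => rw [Finset.sum_range_succ']
              have : ∀ i ∈ Finset.range (N+1), F (i+1) (r+1) * F (N+1-(i+1)) s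
                  = F (i+1) (r+1) * F (N-i) s := by
                intro i _; rw [show N+1-(i+1) = N-i by omega]
              rw [Finset.sum_congr rfl this, F_of_gt (show 0 < r+1 by omega), zero_mul, add_zero]
            rw [e2, ihd (r+1) (by omega), show r+1+s+1 = r+s+2 by omega]
          rw [first, second]
          have := F_rec (N+1) (r+s+1) (by omega)
          rw [show r+s+1-1 = r+s by omega, show r+s+1+1 = r+s+2 by omega] at this
          rw [this]
    exact inner (N+2) r (by omega)






lemma catC_eq_F (m i : ℕ) (h : i ≤ m) : catC m (m - i) = F m i := by
  set nn := m - i with hnn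
  have h2 : 2*m - i = m + nn := by omega
  rw [catC, F, if_pos h, h2]
  have hsym : (m+nn).choose nn = (m+nn).choose m := by
    have hs := Nat.choose_symm (show m ≤ m + nn by omega)
    rwa [show m + nn - m = nn by omega] at hs
  have hc : ((m+nn).choose (m+1) : ℝ) * ((m:ℝ)+1) = ((m+nn).choose m : ℝ) * nn := by
    have hcc := Nat.choose_succ_right_eq (m+nn) m
    rw [show m+nn-m = nn by omega] at hcc
    exact_mod_cast congrArg (fun t : ℕ => (t : ℝ)) hcc
  have hm1 : ((m:ℝ)+1) ≠ 0 := by positivity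
  rw [hsym, div_eq_iff hm1]
  linear_combination hc

-- ===== Vector layer =====

lemma rowMul_X0_apply (v : ℕ → ℝ) (k : ℕ) : rowMul v X0 k = v k + v (k+1) := by
  have h : ∀ b ∉ ({k, k+1} : Finset ℕ), v b * X0 b k = 0 := by
    intro b hb
    simp only [Finset.mem_insert, Finset.mem_singleton] at hb
    push_neg at hb
    rw [X0, if_neg (by omega)]
    ring
  rw [rowMul, tsum_eq_sum h, Finset.sum_pair (by omega : k ≠ k+1)]
  rw [X0, X0, if_pos (Or.inl rfl), if_pos (Or.inr rfl)]
  ring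

lemma rowMul_X1_apply (v : ℕ → ℝ) (k : ℕ) :
    rowMul v X1 k = v k + (if k = 0 then 0 else v (k-1)) := by
  rcases Nat.eq_zero_or_pos k with hk | hk
  · subst hk
    have h : ∀ b ∉ ({0} : Finset ℕ), v b * X1 b 0 = 0 := by
      intro b hb
      simp only [Finset.mem_singleton] at hb
      rw [X1, if_neg (by omega)]
      ring
    rw [rowMul, tsum_eq_sum h, Finset.sum_singleton, X1, if_pos (Or.inl rfl)]
    norm_num
  · obtain ⟨j, rfl⟩ : ∃ j, k = j + 1 := ⟨k - 1, by omega⟩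
    have h : ∀ b ∉ ({j+1, j} : Finset ℕ), v b * X1 b (j+1) = 0 := by
      intro b hb
      simp only [Finset.mem_insert, Finset.mem_singleton] at hb
      push_neg at hb
      rw [X1, if_neg (by omega)]
      ring
    rw [rowMul, tsum_eq_sum h, Finset.sum_pair (by omega : j+1 ≠ j)]
    rw [X1, X1, if_pos (Or.inl rfl), if_pos (Or.inr rfl), if_neg (by omega)]
    have : j + 1 - 1 = j := by omega
    rw [this]
    ring

lemma rowMul_X2_apply (v : ℕ → ℝ) (k : ℕ) :
    rowMul v X2 k = if k = 0 then v 0 else 0 := by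
  have h : ∀ b ∉ ({0} : Finset ℕ), v b * X2 b k = 0 := by
    intro b hb
    simp only [Finset.mem_singleton] at hb
    rw [X2, if_neg (by tauto)]
    ring
  rw [rowMul, tsum_eq_sum h, Finset.sum_singleton, X2]
  by_cases hk : k = 0 <;> simp [hk]

lemma Xmat_zero : Xmat 0 = X0 := rfl
lemma Xmat_one : Xmat 1 = X1 := rfl
lemma Xmat_two : Xmat 2 = X2 := rfl

lemma Xmat_cases (a : Fin 3) : Xmat a = X0 ∨ Xmat a = X1 ∨ Xmat a = X2 := by
  fin_cases a
  · exact Or.inl rfl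
  · exact Or.inr (Or.inl rfl)
  · exact Or.inr (Or.inr rfl)

lemma rowMul_add (a : Fin 3) (u v : ℕ → ℝ) :
    rowMul (u + v) (Xmat a) = rowMul u (Xmat a) + rowMul v (Xmat a) := by
  rcases Xmat_cases a with h | h | h <;> rw [h] <;> funext k <;>
    simp only [Pi.add_apply, rowMul_X0_apply, rowMul_X1_apply, rowMul_X2_apply] <;>
    (try split_ifs) <;> ring

lemma rowMul_smul (a : Fin 3) (c : ℝ) (v : ℕ → ℝ) :
    rowMul (c • v) (Xmat a) = c • rowMul v (Xmat a) := by
  rcases Xmat_cases a with h | h | h <;> rw [h] <;> funext k <;>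
    simp only [Pi.smul_apply, smul_eq_mul, rowMul_X0_apply, rowMul_X1_apply,
      rowMul_X2_apply] <;>
    (try split_ifs) <;> ring

lemma rowMul_zero (a : Fin 3) : rowMul (0 : ℕ → ℝ) (Xmat a) = 0 := by
  rcases Xmat_cases a with h | h | h <;> rw [h] <;> funext k <;>
    simp only [Pi.zero_apply, rowMul_X0_apply, rowMul_X1_apply, rowMul_X2_apply] <;>
    (try split_ifs) <;> ring

lemma rowWord_add : ∀ (w : List (Fin 3)) (u v : ℕ → ℝ),
    rowWord (u + v) w = rowWord u w + rowWord v w := by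
  intro w
  induction w with
  | nil => intro u v; rfl
  | cons a rest ih =>
    intro u v
    show rowWord (rowMul (u+v) (Xmat a)) rest = _
    rw [rowMul_add, ih]
    rfl

lemma rowWord_smul : ∀ (w : List (Fin 3)) (c : ℝ) (v : ℕ → ℝ),
    rowWord (c • v) w = c • rowWord v w := by
  intro w
  induction w with
  | nil => intro c v; rfl
  | cons a rest ih =>
    intro c v
    show rowWord (rowMul (c • v) (Xmat a)) rest = _
    rw [rowMul_smul, ih]
    rfl

lemma rowWord_zero : ∀ (w : List (Fin 3)), rowWord (0 : ℕ → ℝ) w = 0 := by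
  intro w
  induction w with
  | nil => rfl
  | cons a rest ih =>
    show rowWord (rowMul 0 (Xmat a)) rest = _
    rw [rowMul_zero, ih]

lemma rowWord_sum {ι : Type*} (s : Finset ι) (f : ι → ℕ → ℝ) (w : List (Fin 3)) :
    rowWord (∑ j ∈ s, f j) w = ∑ j ∈ s, rowWord (f j) w := by
  classical
  induction s using Finset.induction_on with
  | empty => simp [rowWord_zero]
  | insert j s hj ih =>
    rw [Finset.sum_insert hj, rowWord_add, ih, Finset.sum_insert hj]

lemma rowWord_append (v : ℕ → ℝ) : ∀ (w1 w2 : List (Fin 3)),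
    rowWord v (w1 ++ w2) = rowWord (rowWord v w1) w2 := by
  suffices h : ∀ (w1 : List (Fin 3)) (v : ℕ → ℝ) (w2 : List (Fin 3)),
      rowWord v (w1 ++ w2) = rowWord (rowWord v w1) w2 by
    intro w1 w2; exact h w1 v w2
  intro w1
  induction w1 with
  | nil => intro v w2; rfl
  | cons a rest ih =>
    intro v w2
    show rowWord (rowMul v (Xmat a)) (rest ++ w2) = _
    rw [ih]
    rfl

lemma DE (v : ℕ → ℝ) : rowMul (rowMul v X1) X0 = rowMul v X0 + rowMul v X1 := by
  funext k
  simp only [Pi.add_apply, rowMul_X0_apply, rowMul_X1_apply]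
  rw [if_neg (Nat.succ_ne_zero k), Nat.add_sub_cancel]
  ring

lemma WE {x : ℝ} (hx : x ≠ 0) : rowMul (W x) X0 = x⁻¹ • W x := by
  funext k
  rw [rowMul_X0_apply, Pi.smul_apply, smul_eq_mul]
  show ((1-x)/x)^k + ((1-x)/x)^(k+1) = x⁻¹ * ((1-x)/x)^k
  rw [pow_succ]
  field_simp
  ring

/-- Iterated multiplication by `X1` on the right. -/
def Dk : ℕ → (ℕ → ℝ) → ℕ → ℝ
  | 0, v => v
  | k+1, v => rowMul (Dk k v) X1

/-- Iterated multiplication by `X0` on the right. -/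
def Ek : ℕ → (ℕ → ℝ) → ℕ → ℝ
  | 0, v => v
  | k+1, v => rowMul (Ek k v) X0

lemma Dk_succ' (k : ℕ) (v : ℕ → ℝ) : Dk (k+1) v = Dk k (rowMul v X1) := by
  induction k with
  | zero => rfl
  | succ k ih =>
    show rowMul (Dk (k+1) v) X1 = rowMul (Dk k (rowMul v X1)) X1
    rw [ih]

lemma Ek_succ' (k : ℕ) (v : ℕ → ℝ) : Ek (k+1) v = Ek k (rowMul v X0) := by
  induction k with
  | zero => rfl
  | succ k ih =>
    show rowMul (Ek (k+1) v) X0 = rowMul (Ek k (rowMul v X0)) X0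
    rw [ih]

lemma rowWord_replicate1 : ∀ (k : ℕ) (v : ℕ → ℝ),
    rowWord v (List.replicate k 1) = Dk k v := by
  intro k
  induction k with
  | zero => intro v; rfl
  | succ k ih =>
    intro v
    rw [List.replicate_succ]
    show rowWord (rowMul v (Xmat 1)) (List.replicate k 1) = _
    rw [Xmat_one, ih, ← Dk_succ']

lemma rowWord_replicate0 : ∀ (k : ℕ) (v : ℕ → ℝ),
    rowWord v (List.replicate k 0) = Ek k v := by
  intro k
  induction k with
  | zero => intro v; rfl
  | succ k ih =>
    intro v
    rw [List.replicate_succ]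
    show rowWord (rowMul v (Xmat 0)) (List.replicate k 0) = _
    rw [Xmat_zero, ih, ← Ek_succ']

lemma Dk_zero_apply (k : ℕ) (v : ℕ → ℝ) : Dk k v 0 = v 0 := by
  induction k with
  | zero => rfl
  | succ k ih =>
    show rowMul (Dk k v) X1 0 = v 0
    rw [rowMul_X1_apply, if_pos rfl, ih, add_zero]

lemma DkE (k : ℕ) (v : ℕ → ℝ) :
    rowMul (Dk k v) X0 = rowMul v X0 + ∑ j ∈ Finset.range k, Dk (j+1) v := by
  induction k with
  | zero => simp [Dk]
  | succ k ih =>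
    show rowMul (rowMul (Dk k v) X1) X0 = _
    rw [DE, ih, Finset.sum_range_succ]
    show _ = rowMul v X0 + (∑ j ∈ Finset.range k, Dk (j+1) v + Dk (k+1) v)
    rw [add_assoc]
    rfl

lemma rowMul_X0_add (u v : ℕ → ℝ) : rowMul (u + v) X0 = rowMul u X0 + rowMul v X0 := by
  have := rowMul_add 0 u v
  rwa [Xmat_zero] at this

lemma rowMul_X0_sum {ι : Type*} (s : Finset ι) (f : ι → ℕ → ℝ) :
    rowMul (∑ j ∈ s, f j) X0 = ∑ j ∈ s, rowMul (f j) X0 := by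
  classical
  induction s using Finset.induction_on with
  | empty =>
    simp only [Finset.sum_empty]
    have := rowMul_zero 0
    rwa [Xmat_zero] at this
  | insert j s hj ih =>
    rw [Finset.sum_insert hj, rowMul_X0_add, ih, Finset.sum_insert hj]

lemma EkD (k : ℕ) (z : ℕ → ℝ) :
    Ek k (rowMul z X1) = rowMul z X1 + ∑ j ∈ Finset.range k, Ek (j+1) z := by
  induction k with
  | zero => simp [Ek]
  | succ k ih =>
    show rowMul (Ek k (rowMul z X1)) X0 = _
    rw [ih, rowMul_X0_add, rowMul_X0_sum, DE]
    have e1 : ∀ j, rowMul (Ek (j+1) z) X0 = Ek (j+2) z := fun j => rfl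
    rw [Finset.sum_congr rfl (fun j _ => e1 j)]
    rw [Finset.sum_range_succ' (fun j => Ek (j+1) z) k]
    show rowMul z X0 + rowMul z X1 + ∑ x ∈ Finset.range k, Ek (x+2) z
      = rowMul z X1 + (∑ i ∈ Finset.range k, Ek (i+1+1) z + Ek 1 z)
    have e2 : Ek 1 z = rowMul z X0 := rfl
    rw [e2]
    have e3 : ∀ x ∈ Finset.range k, Ek (x+1+1) z = Ek (x+2) z := fun x _ => rfl
    rw [Finset.sum_congr rfl e3]
    abel

/-- The basis row vector `e₀`. -/
def e0 : ℕ → ℝ := fun i => if i = 0 then 1 else 0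

lemma Ek_e0 (k : ℕ) : Ek k e0 = e0 := by
  induction k with
  | zero => rfl
  | succ k ih =>
    show rowMul (Ek k e0) X0 = e0
    rw [ih]
    funext i
    rw [rowMul_X0_apply]
    simp [e0]

lemma W_one : W 1 = e0 := by
  funext i
  simp [W, e0, zero_pow_eq]

-- bounds
lemma rowMul_bound {v : ℕ → ℝ} {N : ℕ} (h : ∀ i, N ≤ i → v i = 0) (a : Fin 3) :
    ∀ i, N + 1 ≤ i → rowMul v (Xmat a) i = 0 := by
  intro i hi
  rcases Xmat_cases a with ha | ha | ha <;> rw [ha]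
  · rw [rowMul_X0_apply, h i (by omega), h (i+1) (by omega), add_zero]
  · rw [rowMul_X1_apply, h i (by omega), if_neg (by omega), h (i-1) (by omega), zero_add]
  · rw [rowMul_X2_apply, if_neg (by omega)]

lemma rowWord_bound : ∀ (w : List (Fin 3)) (v : ℕ → ℝ) (N : ℕ),
    (∀ i, N ≤ i → v i = 0) → ∀ i, N + w.length ≤ i → rowWord v w i = 0 := by
  intro w
  induction w with
  | nil => intro v N h i hi; exact h i (by simpa using hi)
  | cons a rest ih =>
    intro v N h i hi
    show rowWord (rowMul v (Xmat a)) rest i = 0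
    refine ih (rowMul v (Xmat a)) (N+1) (rowMul_bound h a) i ?_
    simp only [List.length_cons] at hi
    omega

lemma e0_bound : ∀ i, 1 ≤ i → e0 i = 0 := by
  intro i hi
  simp [e0]; omega

lemma tsum_eq_range {f : ℕ → ℝ} {N : ℕ} (h : ∀ i, N ≤ i → f i = 0) :
    ∑' i, f i = ∑ i ∈ Finset.range N, f i := by
  refine tsum_eq_sum ?_
  intro b hb
  exact h b (by simpa using hb)

lemma pairing_smul (c : ℝ) (v : ℕ → ℝ) (word : List (Fin 3)) (w : ℕ → ℝ) :
    pairing (c • v) word w = c * pairing v word w := by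
  rw [pairing, pairing, ← tsum_mul_left]
  congr 1
  funext i
  rw [rowWord_smul]
  simp [mul_assoc]

lemma rowMul_X2_eq (v : ℕ → ℝ) : rowMul v X2 = v 0 • e0 := by
  funext k
  rw [rowMul_X2_apply, Pi.smul_apply, smul_eq_mul, e0]
  split_ifs <;> ring

lemma V_zero (β : ℝ) : V β 0 = 1 := by simp [V]

lemma pair_X1 {z : ℕ → ℝ} {N : ℕ} (hz : ∀ i, N ≤ i → z i = 0) {β : ℝ} (hβ : β ≠ 0) :
    ∑' i, rowMul z X1 i * V β i = β⁻¹ * ∑' i, z i * V β i := by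
  have hb : (1 : ℝ) + (1-β)/β = β⁻¹ := by field_simp; ring
  have h1 : ∀ i, N + 1 ≤ i → rowMul z X1 i * V β i = 0 := by
    intro i hi
    rw [rowMul_X1_apply, hz i (by omega), if_neg (by omega), hz (i-1) (by omega)]
    ring
  have h2 : ∀ i, N + 1 ≤ i → z i * V β i = 0 := by
    intro i hi
    rw [hz i (by omega)]; ring
  rw [tsum_eq_range h1, tsum_eq_range h2]
  have key : ∀ i ∈ Finset.range (N+1), rowMul z X1 i * V β i
      = z i * V β i + (if i = 0 then 0 else z (i-1) * V β i) := by
    intro i _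
    rw [rowMul_X1_apply]
    split_ifs <;> ring
  rw [Finset.sum_congr rfl key, Finset.sum_add_distrib,
    Finset.sum_range_succ' (fun i => if i = 0 then 0 else z (i-1) * V β i) N]
  have e1 : ∀ i ∈ Finset.range N, (if i + 1 = 0 then (0:ℝ) else z (i+1-1) * V β (i+1))
      = (z i * V β i) * ((1-β)/β) := by
    intro i _
    rw [if_neg (Nat.succ_ne_zero i), Nat.add_sub_cancel]
    show z i * ((1-β)/β)^(i+1) = z i * ((1-β)/β)^i * ((1-β)/β)
    rw [pow_succ]; ring
  rw [Finset.sum_congr rfl e1, if_pos rfl, add_zero,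
    Finset.sum_range_succ (fun i => z i * V β i) N, hz N le_rfl, zero_mul, add_zero,
    ← Finset.sum_mul]
  set S := ∑ i ∈ Finset.range N, z i * V β i
  calc S + S * ((1-β)/β) = (1 + (1-β)/β) * S := by ring
  _ = β⁻¹ * S := by rw [hb]




-- ===== Structure layer =====

def emb2 : Fin 2 → Fin 3 := fun a => ⟨a.val, by omega⟩

def wordOf {m : ℕ} (u : Fin m → Fin 2) : List (Fin 3) := List.ofFn (fun i => emb2 (u i))

def GS (v : ℕ → ℝ) (m : ℕ) : ℝ := ∑ u : Fin m → Fin 2, rowWord v (wordOf u) 0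

def Q2 (β : ℝ) (ℓ n : ℕ) : ℝ := ∑ τ ∈ Y ℓ n, pairing e0 (List.ofFn τ) (V β)

lemma wordOf_len {m : ℕ} (u : Fin m → Fin 2) : (wordOf u).length = m := by
  rw [wordOf, List.length_ofFn]

lemma GS_zero (v : ℕ → ℝ) : GS v 0 = v 0 := by
  rw [GS]
  rw [Finset.sum_eq_single_of_mem (fun _ => 0) (Finset.mem_univ _)]
  · rfl
  · intro u _ hne
    exact absurd (funext fun i => absurd i.2 (by omega)) hne

lemma wordOf_cons {m : ℕ} (a : Fin 2) (u : Fin m → Fin 2) :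
    wordOf (Fin.cons a u) = emb2 a :: wordOf u := by
  rw [wordOf, List.ofFn_succ]
  simp only [Fin.cons_zero, Fin.cons_succ]
  rfl

lemma wordOf_snoc {m : ℕ} (u : Fin m → Fin 2) (a : Fin 2) :
    wordOf (Fin.snoc u a) = wordOf u ++ [emb2 a] := by
  rw [wordOf, List.ofFn_succ']
  simp only [Fin.snoc_castSucc, Fin.snoc_last]
  rw [List.concat_eq_append]
  rfl

lemma sum_fn_succ_fin2 {M : Type*} [AddCommMonoid M] (m : ℕ) (f : (Fin (m+1) → Fin 2) → M) :
    ∑ u : Fin (m+1) → Fin 2, f u = ∑ a : Fin 2, ∑ u : Fin m → Fin 2, f (Fin.cons a u) := by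
  rw [← Equiv.sum_comp (Fin.consEquiv fun _ => Fin 2) f, Fintype.sum_prod_type]
  rfl

lemma sum_fn_succ_fin3 {M : Type*} [AddCommMonoid M] (m : ℕ) (f : (Fin (m+1) → Fin 3) → M) :
    ∑ u : Fin (m+1) → Fin 3, f u = ∑ a : Fin 3, ∑ u : Fin m → Fin 3, f (Fin.cons a u) := by
  rw [← Equiv.sum_comp (Fin.consEquiv fun _ => Fin 3) f, Fintype.sum_prod_type]
  rfl

lemma sum_fn_snoc_fin2 {M : Type*} [AddCommMonoid M] (m : ℕ) (f : (Fin (m+1) → Fin 2) → M) :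
    ∑ u : Fin (m+1) → Fin 2, f u = ∑ a : Fin 2, ∑ u : Fin m → Fin 2, f (Fin.snoc u a) := by
  rw [← Equiv.sum_comp (Fin.snocEquiv fun _ => Fin 2) f, Fintype.sum_prod_type]
  rfl

lemma GS_succ (v : ℕ → ℝ) (m : ℕ) :
    GS v (m+1) = GS (rowMul v X0) m + GS (rowMul v X1) m := by
  rw [GS, sum_fn_succ_fin2, Fin.sum_univ_two]
  congr 1
  · apply Finset.sum_congr rfl
    intro u _
    rw [wordOf_cons]
    rfl
  · apply Finset.sum_congr rfl
    intro u _
    rw [wordOf_cons]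
    rfl

lemma GS_add (u v : ℕ → ℝ) (m : ℕ) : GS (u + v) m = GS u m + GS v m := by
  rw [GS, GS, GS, ← Finset.sum_add_distrib]
  apply Finset.sum_congr rfl
  intro w _
  rw [rowWord_add, Pi.add_apply]

lemma GS_smul (c : ℝ) (v : ℕ → ℝ) (m : ℕ) : GS (c • v) m = c * GS v m := by
  rw [GS, GS, Finset.mul_sum]
  apply Finset.sum_congr rfl
  intro w _
  rw [rowWord_smul, Pi.smul_apply, smul_eq_mul]

lemma GS_sum {ι : Type*} (s : Finset ι) (f : ι → ℕ → ℝ) (m : ℕ) :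
    GS (∑ j ∈ s, f j) m = ∑ j ∈ s, GS (f j) m := by
  rw [GS]
  have h : ∀ u ∈ (Finset.univ : Finset (Fin m → Fin 2)),
      rowWord (∑ j ∈ s, f j) (wordOf u) 0 = ∑ j ∈ s, rowWord (f j) (wordOf u) 0 := by
    intro u _
    rw [rowWord_sum, Finset.sum_apply]
  rw [Finset.sum_congr rfl h, Finset.sum_comm]
  rfl

lemma keyId' (k m j : ℕ) :
    F (m+1+k) (k+j) = (if 1 ≤ j then F m (j-1) else 0)
      + (∑ i ∈ Finset.range k, F (m+(i+1)) ((i+1)+j)) + F (m+k+1) (k+j+1) := by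
  rw [keyId k m j]
  congr 2
  rw [← Finset.Ico_add_one_right_eq_Icc, Finset.sum_Ico_eq_sum_range]
  apply Finset.sum_congr rfl
  intro i _
  rw [show 1+i = i+1 by omega]

lemma solveRec (y : ℝ) (g : ℕ → ℕ → ℝ) (h0 : ∀ k, g 0 k = 1)
    (hrec : ∀ m k, g (m+1) k = y * g m 0 + (∑ j ∈ Finset.range k, g m (j+1)) + g m (k+1)) :
    ∀ m k, g m k = ∑ j ∈ Finset.range (m+1), F (m+k) (k+j) * y^j := by
  intro m
  induction m with
  | zero =>
    intro k
    rw [h0, Finset.sum_range_one]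
    simp [F_self]
  | succ m ih =>
    intro k
    rw [hrec m k, ih 0, ih (k+1)]
    have hmid : ∀ j ∈ Finset.range k, g m (j+1)
        = ∑ t ∈ Finset.range (m+1), F (m+(j+1)) ((j+1)+t) * y^t := by
      intro j _; exact ih (j+1)
    rw [Finset.sum_congr rfl hmid]
    have t1 : y * (∑ j ∈ Finset.range (m+1), F (m+0) (0+j) * y^j)
        = ∑ j ∈ Finset.range (m+1+1), (if 1 ≤ j then F m (j-1) else 0) * y^j := by
      simp only [Nat.add_zero, Nat.zero_add]
      rw [Finset.mul_sum,
        Finset.sum_range_succ' (fun j => (if 1 ≤ j then F m (j-1) else 0) * y^j) (m+1)]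
      rw [if_neg (by omega : ¬ ((1:ℕ) ≤ 0)), zero_mul, add_zero]
      apply Finset.sum_congr rfl
      intro j _
      rw [if_pos (by omega : 1 ≤ j + 1), Nat.add_sub_cancel, pow_succ]
      ring
    have t3 : (∑ j ∈ Finset.range (m+1), F (m+(k+1)) ((k+1)+j) * y^j)
        = ∑ j ∈ Finset.range (m+1+1), F (m+k+1) (k+j+1) * y^j := by
      rw [Finset.sum_range_succ (fun j => F (m+k+1) (k+j+1) * y^j) (m+1),
        F_of_gt (by omega), zero_mul, add_zero]
      apply Finset.sum_congr rfl
      intro j _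
      rw [show m+(k+1) = m+k+1 by omega, show (k+1)+j = k+j+1 by omega]
    have t2 : (∑ j ∈ Finset.range k, ∑ t ∈ Finset.range (m+1), F (m+(j+1)) ((j+1)+t) * y^t)
        = ∑ t ∈ Finset.range (m+1+1), (∑ j ∈ Finset.range k, F (m+(j+1)) ((j+1)+t)) * y^t := by
      rw [Finset.sum_comm,
        Finset.sum_range_succ (fun t => (∑ j ∈ Finset.range k, F (m+(j+1)) ((j+1)+t)) * y^t) (m+1)]
      have hz : (∑ j ∈ Finset.range k, F (m+(j+1)) ((j+1)+(m+1))) = 0 :=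
        Finset.sum_eq_zero (fun j _ => F_of_gt (by omega))
      rw [hz, zero_mul, add_zero]
      apply Finset.sum_congr rfl
      intro t _
      rw [Finset.sum_mul]
    rw [t1, t2, t3, ← Finset.sum_add_distrib, ← Finset.sum_add_distrib]
    apply Finset.sum_congr rfl
    intro j _
    rw [← add_mul, ← add_mul, ← keyId' k m j]

lemma GS_Dk_closed {x : ℝ} (hx : x ≠ 0) :
    ∀ m k, GS (Dk k (W x)) m = ∑ j ∈ Finset.range (m+1), F (m+k) (k+j) * (x⁻¹)^j := by
  refine solveRec x⁻¹ (fun m k => GS (Dk k (W x)) m) ?_ ?_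
  · intro k
    show GS (Dk k (W x)) 0 = 1
    rw [GS_zero, Dk_zero_apply]
    exact pow_zero _
  · intro m k
    show GS (Dk k (W x)) (m+1) = x⁻¹ * GS (Dk 0 (W x)) m
      + (∑ j ∈ Finset.range k, GS (Dk (j+1) (W x)) m) + GS (Dk (k+1) (W x)) m
    rw [GS_succ, DkE, GS_add, GS_sum, WE hx, GS_smul]
    rfl

lemma Ek_bound (j : ℕ) {z : ℕ → ℝ} {N : ℕ} (h : ∀ i, N ≤ i → z i = 0) :
    ∀ i, N ≤ i → Ek j z i = 0 := by
  induction j with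
  | zero => exact h
  | succ j ih =>
    intro i hi
    show rowMul (Ek j z) X0 i = 0
    rw [rowMul_X0_apply, ih i hi, ih (i+1) (by omega), add_zero]

lemma pair_one_block {β : ℝ} (hβ : β ≠ 0) {m : ℕ} (u : Fin m → Fin 2) (k : ℕ) :
    pairing e0 (wordOf u ++ ((1 : Fin 3) :: List.replicate k 0)) (V β)
      = β⁻¹ * pairing e0 (wordOf u) (V β)
        + ∑ j ∈ Finset.range k, pairing e0 (wordOf u ++ List.replicate (j+1) 0) (V β) := by
  set z := rowWord e0 (wordOf u) with hz
  have hzb : ∀ i, (m+1) ≤ i → z i = 0 := by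
    intro i hi
    rw [hz]
    apply rowWord_bound (wordOf u) e0 1 e0_bound
    rw [wordOf_len]
    omega
  have hX1b : ∀ i, m+2 ≤ i → rowMul z X1 i = 0 := by
    intro i hi
    have := rowMul_bound hzb (1 : Fin 3) i (by omega)
    rwa [Xmat_one] at this
  have hword : rowWord z ((1 : Fin 3) :: List.replicate k 0)
      = rowMul z X1 + ∑ j ∈ Finset.range k, Ek (j+1) z := by
    show rowWord (rowMul z (Xmat 1)) (List.replicate k 0) = _
    rw [Xmat_one, rowWord_replicate0, EkD]
  have hbig : ∀ i, m+2 ≤ i →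
      (rowMul z X1 + ∑ j ∈ Finset.range k, Ek (j+1) z) i * V β i = 0 := by
    intro i hi
    rw [Pi.add_apply, hX1b i hi, Finset.sum_apply,
      Finset.sum_eq_zero (fun j _ => Ek_bound (j+1) hzb i (by omega)), add_zero, zero_mul]
  rw [pairing, rowWord_append, ← hz, hword, tsum_eq_range hbig]
  have exp : ∀ i ∈ Finset.range (m+2),
      (rowMul z X1 + ∑ j ∈ Finset.range k, Ek (j+1) z) i * V β i
        = rowMul z X1 i * V β i + ∑ j ∈ Finset.range k, Ek (j+1) z i * V β i := by
    intro i _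
    rw [Pi.add_apply, Finset.sum_apply, add_mul, Finset.sum_mul]
  rw [Finset.sum_congr rfl exp, Finset.sum_add_distrib, Finset.sum_comm]
  congr 1
  · rw [← tsum_eq_range (fun i hi => by rw [hX1b i hi, zero_mul]), pair_X1 hzb hβ]
    rfl
  · apply Finset.sum_congr rfl
    intro j _
    rw [pairing, rowWord_append, ← hz, rowWord_replicate0]
    rw [tsum_eq_range (N := m+2)
      (fun i hi => by rw [Ek_bound (j+1) hzb i (by omega), zero_mul])]

lemma colClosed {β : ℝ} (hβ : β ≠ 0) :
    ∀ m k, (∑ u : Fin m → Fin 2, pairing e0 (wordOf u ++ List.replicate k 0) (V β))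
      = ∑ j ∈ Finset.range (m+1), F (m+k) (k+j) * (β⁻¹)^j := by
  refine solveRec β⁻¹
    (fun m k => ∑ u : Fin m → Fin 2, pairing e0 (wordOf u ++ List.replicate k 0) (V β)) ?_ ?_
  · intro k
    show (∑ u : Fin 0 → Fin 2, pairing e0 (wordOf u ++ List.replicate k 0) (V β)) = 1
    rw [Finset.sum_eq_single_of_mem (fun _ => 0) (Finset.mem_univ _)]
    · have hw : wordOf (fun (_ : Fin 0) => (0 : Fin 2)) = [] := rfl
      rw [hw, List.nil_append, pairing, rowWord_replicate0, Ek_e0]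
      rw [tsum_eq_range (N := 1) (fun i hi => by rw [e0_bound i hi, zero_mul])]
      rw [Finset.sum_range_one, V_zero]
      simp [e0]
    · intro u _ hne
      exact absurd (funext fun i => absurd i.2 (by omega)) hne
  · intro m k
    show (∑ u : Fin (m+1) → Fin 2, pairing e0 (wordOf u ++ List.replicate k 0) (V β))
      = β⁻¹ * (∑ u : Fin m → Fin 2, pairing e0 (wordOf u ++ List.replicate 0 0) (V β))
        + (∑ j ∈ Finset.range k,
            ∑ u : Fin m → Fin 2, pairing e0 (wordOf u ++ List.replicate (j+1) 0) (V β))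
        + ∑ u : Fin m → Fin 2, pairing e0 (wordOf u ++ List.replicate (k+1) 0) (V β)
    rw [sum_fn_snoc_fin2, Fin.sum_univ_two]
    have h0 : ∀ u : Fin m → Fin 2,
        pairing e0 (wordOf (Fin.snoc u 0) ++ List.replicate k 0) (V β)
          = pairing e0 (wordOf u ++ List.replicate (k+1) 0) (V β) := by
      intro u
      rw [wordOf_snoc, List.append_assoc]
      rfl
    have h1 : ∀ u : Fin m → Fin 2,
        pairing e0 (wordOf (Fin.snoc u 1) ++ List.replicate k 0) (V β)
          = β⁻¹ * pairing e0 (wordOf u) (V β)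
            + ∑ j ∈ Finset.range k, pairing e0 (wordOf u ++ List.replicate (j+1) 0) (V β) := by
      intro u
      rw [wordOf_snoc, List.append_assoc]
      exact pair_one_block hβ u k
    rw [Finset.sum_congr rfl (fun u _ => h0 u), Finset.sum_congr rfl (fun u _ => h1 u)]
    rw [Finset.sum_add_distrib, ← Finset.mul_sum, Finset.sum_comm]
    have e2 : ∀ u : Fin m → Fin 2,
        pairing e0 (wordOf u) (V β) = pairing e0 (wordOf u ++ List.replicate 0 0) (V β) := by
      intro u
      rw [show List.replicate 0 (0 : Fin 3) = [] from rfl, List.append_nil]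
    rw [Finset.sum_congr rfl (fun u _ => e2 u)]
    ring



-- ===== Decomposition layer =====

lemma numTwos_cons {L : ℕ} (a : Fin 3) (τ : Fin L → Fin 3) :
    numTwos (Fin.cons a τ) = (if a = 2 then 1 else 0) + numTwos τ := by
  rw [numTwos, numTwos, Finset.card_filter, Finset.card_filter, Fin.sum_univ_succ]
  simp only [Fin.cons_zero, Fin.cons_succ]

lemma ofFn_cons {L : ℕ} (a : Fin 3) (τ : Fin L → Fin 3) :
    List.ofFn (Fin.cons a τ) = a :: List.ofFn τ := by
  rw [List.ofFn_succ]
  simp only [Fin.cons_zero, Fin.cons_succ]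

lemma lemmaA (β : ℝ) : ∀ (L : ℕ) (v : ℕ → ℝ) (n : ℕ), 1 ≤ n →
    (∑ τ ∈ Y L n, pairing v (List.ofFn τ) (V β))
      = ∑ m ∈ Finset.range L, GS v m * Q2 β (L-1-m) (n-1) := by
  intro L
  induction L with
  | zero =>
    intro v n hn
    rw [Finset.range_zero, Finset.sum_empty]
    have hY : Y 0 n = ∅ := by
      apply Finset.eq_empty_of_forall_notMem
      intro τ hτ
      rw [Y, Finset.mem_filter] at hτ
      have h0 : numTwos τ = 0 := by
        rw [numTwos]
        simp
      omega
    rw [hY, Finset.sum_empty]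
  | succ L ih =>
    intro v n hn
    rw [Y, Finset.sum_filter, sum_fn_succ_fin3, Fin.sum_univ_three]
    have key : ∀ (a : Fin 3) (τ : Fin L → Fin 3),
        (if numTwos (Fin.cons a τ) = n then pairing v (List.ofFn (Fin.cons a τ)) (V β) else 0)
          = (if (if a = 2 then 1 else 0) + numTwos τ = n
              then pairing (rowMul v (Xmat a)) (List.ofFn τ) (V β) else 0) := by
      intro a τ
      rw [numTwos_cons, ofFn_cons]
      rfl
    have branch : ∀ v' : ℕ → ℝ,
        (∑ τ : Fin L → Fin 3, if numTwos τ = n then pairing v' (List.ofFn τ) (V β) else 0)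
          = ∑ m ∈ Finset.range L, GS v' m * Q2 β (L-1-m) (n-1) := by
      intro v'
      have h := ih v' n hn
      rw [Y, Finset.sum_filter] at h
      exact h
    have b0 : (∑ τ : Fin L → Fin 3,
        if numTwos (Fin.cons 0 τ) = n then pairing v (List.ofFn (Fin.cons 0 τ)) (V β) else 0)
          = ∑ m ∈ Finset.range L, GS (rowMul v X0) m * Q2 β (L-1-m) (n-1) := by
      rw [Finset.sum_congr rfl (fun τ _ => key 0 τ)]
      have e : ∀ τ : Fin L → Fin 3,
          (if (if (0 : Fin 3) = 2 then 1 else 0) + numTwos τ = n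
            then pairing (rowMul v (Xmat 0)) (List.ofFn τ) (V β) else 0)
          = (if numTwos τ = n then pairing (rowMul v X0) (List.ofFn τ) (V β) else 0) := by
        intro τ
        rw [if_neg (by decide : ¬ (0:Fin 3) = 2), Nat.zero_add, Xmat_zero]
      rw [Finset.sum_congr rfl (fun τ _ => e τ), branch]
    have b1 : (∑ τ : Fin L → Fin 3,
        if numTwos (Fin.cons 1 τ) = n then pairing v (List.ofFn (Fin.cons 1 τ)) (V β) else 0)
          = ∑ m ∈ Finset.range L, GS (rowMul v X1) m * Q2 β (L-1-m) (n-1) := by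
      rw [Finset.sum_congr rfl (fun τ _ => key 1 τ)]
      have e : ∀ τ : Fin L → Fin 3,
          (if (if (1 : Fin 3) = 2 then 1 else 0) + numTwos τ = n
            then pairing (rowMul v (Xmat 1)) (List.ofFn τ) (V β) else 0)
          = (if numTwos τ = n then pairing (rowMul v X1) (List.ofFn τ) (V β) else 0) := by
        intro τ
        rw [if_neg (by decide : ¬ (1:Fin 3) = 2), Nat.zero_add, Xmat_one]
      rw [Finset.sum_congr rfl (fun τ _ => e τ), branch]
    have b2 : (∑ τ : Fin L → Fin 3,
        if numTwos (Fin.cons 2 τ) = n then pairing v (List.ofFn (Fin.cons 2 τ)) (V β) else 0)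
          = v 0 * Q2 β L (n-1) := by
      rw [Finset.sum_congr rfl (fun τ _ => key 2 τ)]
      have e : ∀ τ : Fin L → Fin 3,
          (if (if (2 : Fin 3) = 2 then 1 else 0) + numTwos τ = n
            then pairing (rowMul v (Xmat 2)) (List.ofFn τ) (V β) else 0)
          = v 0 * (if numTwos τ = n - 1 then pairing e0 (List.ofFn τ) (V β) else 0) := by
        intro τ
        rw [if_pos (by decide : (2:Fin 3) = 2), Xmat_two, rowMul_X2_eq]
        rw [if_congr (by omega : (1 + numTwos τ = n) ↔ (numTwos τ = n - 1)) rfl rfl]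
        split_ifs
        · rw [pairing_smul]
        · rw [mul_zero]
      rw [Finset.sum_congr rfl (fun τ _ => e τ), ← Finset.mul_sum]
      congr 1
      rw [Q2, Y, Finset.sum_filter]
    rw [b0, b1, b2]
    rw [Finset.sum_range_succ' (fun m => GS v m * Q2 β (L+1-1-m) (n-1)) L]
    have e1 : ∀ m ∈ Finset.range L,
        GS v (m+1) * Q2 β (L+1-1-(m+1)) (n-1)
          = GS (rowMul v X0) m * Q2 β (L-1-m) (n-1)
            + GS (rowMul v X1) m * Q2 β (L-1-m) (n-1) := by
      intro m _
      rw [show L+1-1-(m+1) = L-1-m by omega, GS_succ, add_mul]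
    rw [Finset.sum_congr rfl e1, Finset.sum_add_distrib]
    rw [show L+1-1-0 = L by omega, GS_zero]

/-- `Q2` at `n = 0` equals the sum over binary words. -/
lemma Q2_zero_eq (β : ℝ) (ℓ : ℕ) :
    Q2 β ℓ 0 = ∑ u : Fin ℓ → Fin 2, pairing e0 (wordOf u) (V β) := by
  have he1 : ∀ a : Fin 2, emb2 a ≠ 2 := by decide
  have he2 : ∀ b : Fin 3, b ≠ 2 → emb2 (if b = 1 then (1:Fin 2) else 0) = b := by decide
  have he3 : ∀ a : Fin 2, (if emb2 a = 1 then (1:Fin 2) else 0) = a := by decide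
  have hτ2 : ∀ τ : Fin ℓ → Fin 3, numTwos τ = 0 → ∀ x, τ x ≠ 2 := by
    intro τ h x
    rw [numTwos, Finset.card_eq_zero, Finset.filter_eq_empty_iff] at h
    exact h (Finset.mem_univ x)
  rw [Q2]
  refine Finset.sum_nbij' (i := fun τ => fun x => if τ x = 1 then (1:Fin 2) else 0)
    (j := fun u => fun x => emb2 (u x)) ?_ ?_ ?_ ?_ ?_
  · intro τ _
    exact Finset.mem_univ _
  · intro u _
    rw [Y, Finset.mem_filter]
    refine ⟨Finset.mem_univ _, ?_⟩
    rw [numTwos, Finset.card_eq_zero, Finset.filter_eq_empty_iff]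
    intro x _
    exact he1 (u x)
  · intro τ hτ
    rw [Y, Finset.mem_filter] at hτ
    funext x
    exact he2 (τ x) (hτ2 τ hτ.2 x)
  · intro u _
    funext x
    exact he3 (u x)
  · intro τ hτ
    rw [Y, Finset.mem_filter] at hτ
    show pairing e0 (List.ofFn τ) (V β)
      = pairing e0 (List.ofFn fun i => emb2 (if τ i = 1 then (1:Fin 2) else 0)) (V β)
    rw [show (fun i => emb2 (if τ i = 1 then (1:Fin 2) else 0)) = τ from
      funext fun x => he2 (τ x) (hτ2 τ hτ.2 x)]

lemma colClosed0 {β : ℝ} (hβ : β ≠ 0) (m : ℕ) :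
    (∑ u : Fin m → Fin 2, pairing e0 (wordOf u) (V β))
      = ∑ j ∈ Finset.range (m+1), F m j * (β⁻¹)^j := by
  have h := colClosed hβ m 0
  have e : ∀ u : Fin m → Fin 2,
      pairing e0 (wordOf u ++ List.replicate 0 0) (V β) = pairing e0 (wordOf u) (V β) := by
    intro u
    rw [show List.replicate 0 (0 : Fin 3) = [] from rfl, List.append_nil]
  rw [Finset.sum_congr rfl (fun u _ => e u)] at h
  rw [h]
  apply Finset.sum_congr rfl
  intro j _
  rw [show m+0 = m by omega, Nat.zero_add]

lemma GS_W (x : ℝ) (hx : x ≠ 0) (m : ℕ) :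
    GS (W x) m = ∑ i ∈ Finset.range (m+1), F m i * (x⁻¹)^i := by
  have h := GS_Dk_closed hx m 0
  have e : Dk 0 (W x) = W x := rfl
  rw [e] at h
  rw [h]
  apply Finset.sum_congr rfl
  intro i _
  rw [show m+0 = m by omega, Nat.zero_add]

lemma GS_e0 (m : ℕ) : GS e0 m = F (m+1) 1 := by
  have h := GS_W 1 one_ne_zero m
  rw [W_one] at h
  rw [h, ← F_sum_range]
  apply Finset.sum_congr rfl
  intro i _
  norm_num

lemma Q2_closed {β : ℝ} (hβ : β ≠ 0) : ∀ n ℓ, Q2 β ℓ n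
    = ∑ j ∈ Finset.range (ℓ+1), F (ℓ+n) (2*n+j) * (β⁻¹)^j := by
  intro n
  induction n with
  | zero =>
    intro ℓ
    rw [Q2_zero_eq, colClosed0 hβ]
    apply Finset.sum_congr rfl
    intro j _
    rw [show ℓ+0 = ℓ by omega, show 2*0+j = j by omega]
  | succ n ihn =>
    intro ℓ
    have hA := lemmaA β ℓ e0 (n+1) (by omega)
    have hQ : Q2 β ℓ (n+1) = ∑ τ ∈ Y ℓ (n+1), pairing e0 (List.ofFn τ) (V β) := rfl
    rw [hQ, hA, show n+1-1 = n by omega]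
    have step1 : ∀ m ∈ Finset.range ℓ,
        GS e0 m * Q2 β (ℓ-1-m) n
          = ∑ j ∈ Finset.range (ℓ+1), (F (m+1) 1 * F ((ℓ+n)-(m+1)) (2*n+j)) * (β⁻¹)^j := by
      intro m hm
      rw [Finset.mem_range] at hm
      rw [GS_e0, ihn (ℓ-1-m), Finset.mul_sum]
      rw [Finset.sum_subset (Finset.range_subset_range.mpr (by omega : ℓ-1-m+1 ≤ ℓ+1))
        (fun j hj1 hj2 => by
          rw [Finset.mem_range] at hj1
          rw [Finset.mem_range] at hj2
          rw [F_of_gt (show (ℓ-1-m)+n < 2*n+j by omega), zero_mul, mul_zero])]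
      apply Finset.sum_congr rfl
      intro j _
      rw [show (ℓ-1-m)+n = (ℓ+n)-(m+1) by omega]
      ring
    rw [Finset.sum_congr rfl step1, Finset.sum_comm]
    apply Finset.sum_congr rfl
    intro j _
    rw [← Finset.sum_mul]
    congr 1
    have e2 : (∑ m ∈ Finset.range ℓ, F (m+1) 1 * F ((ℓ+n)-(m+1)) (2*n+j))
        = ∑ m ∈ Finset.range (ℓ+1), F m 1 * F ((ℓ+n)-m) (2*n+j) := by
      rw [Finset.sum_range_succ' (fun m => F m 1 * F ((ℓ+n)-m) (2*n+j)) ℓ]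
      rw [F_zero_one, zero_mul, add_zero]
    rw [e2]
    rw [Finset.sum_subset (Finset.range_subset_range.mpr (by omega : ℓ+1 ≤ ℓ+n+1))
      (fun m hm hm' => by
        rw [Finset.mem_range] at hm hm'
        rw [F_of_gt (show (ℓ+n)-m < 2*n+j by omega), mul_zero])]
    have := conv (ℓ+n) 1 (2*n+j)
    rw [this, show 1+(2*n+j)+1 = 2*(n+1)+j by omega, show ℓ+n+1 = ℓ+(n+1) by omega]


/-- the partition function decomposes as
`Z^{α,β}(L,n) = (αβ/(α−β)) (R(L,n,β) − R(L,n,α))` for `0 < n < L`, `α ≠ β`. -/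
theorem Z_decomposition (α β : ℝ)
    (hα : α ∈ Set.Ioc (0 : ℝ) 1) (hβ : β ∈ Set.Ioc (0 : ℝ) 1) (hαβ : α ≠ β)
    (L n : ℕ) (h0n : 0 < n) (hnL : n < L) :
    Z α β L n = (α * β / (α - β)) * (R L n β - R L n α) := by
  obtain ⟨hα0, hα1⟩ := hα
  obtain ⟨hβ0, hβ1⟩ := hβ
  have hαne : α ≠ 0 := ne_of_gt hα0
  have hβne : β ≠ 0 := ne_of_gt hβ0
  have h1 : Z α β L n = ∑ m ∈ Finset.range L, GS (W α) m * Q2 β (L-1-m) (n-1) := by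
    rw [Z]
    have hwt : ∀ τ ∈ Y L n, wt α β τ = pairing (W α) (List.ofFn τ) (V β) := fun τ _ => rfl
    rw [Finset.sum_congr rfl hwt]
    exact lemmaA β L (W α) n h0n
  have h2 : Z α β L n = ∑ i ∈ Finset.range L, ∑ j ∈ Finset.range L,
      F (L+n-1) (2*n-1+(i+j)) * ((α⁻¹)^i * (β⁻¹)^j) := by
    rw [h1]
    have hm1 : ∀ m ∈ Finset.range L, GS (W α) m * Q2 β (L-1-m) (n-1)
        = ∑ i ∈ Finset.range L, ∑ j ∈ Finset.range L,
            (F m i * F ((L+n-2)-m) (2*(n-1)+j)) * ((α⁻¹)^i * (β⁻¹)^j) := by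
      intro m hm
      rw [Finset.mem_range] at hm
      rw [GS_W α hαne, Q2_closed hβne (n-1) (L-1-m)]
      have p1 : (∑ i ∈ Finset.range (m+1), F m i * (α⁻¹)^i)
          = ∑ i ∈ Finset.range L, F m i * (α⁻¹)^i :=
        Finset.sum_subset (Finset.range_subset_range.mpr (by omega))
          (fun i hi1 hi2 => by
            rw [Finset.mem_range] at hi1 hi2
            rw [F_of_gt (show m < i by omega), zero_mul])
      have p2 : (∑ j ∈ Finset.range ((L-1-m)+1), F ((L-1-m)+(n-1)) (2*(n-1)+j) * (β⁻¹)^j)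
          = ∑ j ∈ Finset.range L, F ((L+n-2)-m) (2*(n-1)+j) * (β⁻¹)^j := by
        rw [show (L-1-m)+(n-1) = (L+n-2)-m by omega]
        exact Finset.sum_subset (Finset.range_subset_range.mpr (by omega))
          (fun j hj1 hj2 => by
            rw [Finset.mem_range] at hj1 hj2
            rw [F_of_gt (show (L+n-2)-m < 2*(n-1)+j by omega), zero_mul])
      rw [p1, p2, Finset.sum_mul_sum]
      apply Finset.sum_congr rfl; intro i _
      apply Finset.sum_congr rfl; intro j _
      ring
    rw [Finset.sum_congr rfl hm1, Finset.sum_comm]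
    apply Finset.sum_congr rfl; intro i _
    rw [Finset.sum_comm]
    apply Finset.sum_congr rfl; intro j _
    rw [← Finset.sum_mul]
    congr 1
    rw [Finset.sum_subset (Finset.range_subset_range.mpr (show L ≤ (L+n-2)+1 by omega))
      (fun m hm1 hm2 => by
        rw [Finset.mem_range] at hm1 hm2
        rw [F_of_gt (show (L+n-2)-m < 2*(n-1)+j by omega), mul_zero])]
    rw [conv (L+n-2) i (2*(n-1)+j), show i+(2*(n-1)+j)+1 = 2*n-1+(i+j) by omega,
      show (L+n-2)+1 = L+n-1 by omega]
  have geom : ∀ k : ℕ, (α * β / (α - β)) * ((β^(k+1))⁻¹ - (α^(k+1))⁻¹)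
      = ∑ i ∈ Finset.range (k+1), (α⁻¹)^i * (β⁻¹)^(k-i) := by
    intro k
    have hab : α⁻¹ - β⁻¹ ≠ 0 := by
      rw [sub_ne_zero]
      intro hcontra
      exact hαβ (by rw [← inv_inv α, hcontra, inv_inv])
    have hg := geom_sum₂_mul (α⁻¹) (β⁻¹) (k+1)
    have hidx : ∀ i ∈ Finset.range (k+1),
        (α⁻¹)^i * (β⁻¹)^(k+1-1-i) = (α⁻¹)^i * (β⁻¹)^(k-i) := by
      intro i _
      rw [show k+1-1-i = k-i by omega]
    rw [Finset.sum_congr rfl hidx] at hg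
    apply mul_right_cancel₀ hab
    rw [hg, inv_pow, inv_pow]
    have hsub : α - β ≠ 0 := sub_ne_zero.mpr hαβ
    field_simp
    ring
  have h4 : (α * β / (α - β)) * (R L n β - R L n α)
      = ∑ k ∈ Finset.range (L-n+1), F (L+n-1) (2*n-1+k)
          * ∑ i ∈ Finset.range (k+1), (α⁻¹)^i * (β⁻¹)^(k-i) := by
    rw [R, R, ← Finset.sum_sub_distrib, Finset.mul_sum]
    apply Finset.sum_congr rfl
    intro k hk
    rw [Finset.mem_range] at hk
    have hc : catC (L+n-1) (L-n-k) = F (L+n-1) (2*n-1+k) := by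
      have h := catC_eq_F (L+n-1) (2*n-1+k) (by omega)
      rwa [show (L+n-1)-(2*n-1+k) = L-n-k by omega] at h
    rw [← mul_sub, hc, ← geom k]
    ring
  have h5 : (∑ i ∈ Finset.range L, ∑ j ∈ Finset.range L,
        F (L+n-1) (2*n-1+(i+j)) * ((α⁻¹)^i * (β⁻¹)^j))
      = ∑ k ∈ Finset.range (L-n+1), F (L+n-1) (2*n-1+k)
          * ∑ i ∈ Finset.range (k+1), (α⁻¹)^i * (β⁻¹)^(k-i) := by
    trans (∑ p ∈ (Finset.range (L-n+1)).sigma (fun k => Finset.range (k+1)),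
        F (L+n-1) (2*n-1+p.1) * ((α⁻¹)^p.2 * (β⁻¹)^(p.1-p.2)))
    · rw [← Finset.sum_product']
      rw [← Finset.sum_filter_add_sum_filter_not
        ((Finset.range L) ×ˢ (Finset.range L)) (fun p => p.1 + p.2 ≤ L-n)]
      have hz : (∑ p ∈ ((Finset.range L) ×ˢ (Finset.range L)).filter
          (fun p => ¬ p.1 + p.2 ≤ L-n),
            F (L+n-1) (2*n-1+(p.1+p.2)) * ((α⁻¹)^p.1 * (β⁻¹)^p.2)) = 0 := by
        apply Finset.sum_eq_zero
        intro p hp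
        rw [Finset.mem_filter, Finset.mem_product, Finset.mem_range, Finset.mem_range] at hp
        rw [F_of_gt (show L+n-1 < 2*n-1+(p.1+p.2) by omega), zero_mul]
      rw [hz, add_zero]
      refine Finset.sum_nbij' (i := fun p => ⟨p.1+p.2, p.1⟩)
        (j := fun q => (q.2, q.1-q.2)) ?_ ?_ ?_ ?_ ?_
      · intro p hp
        rw [Finset.mem_filter, Finset.mem_product, Finset.mem_range, Finset.mem_range] at hp
        rw [Finset.mem_sigma, Finset.mem_range, Finset.mem_range]
        exact ⟨show p.1+p.2 < L-n+1 by omega, show p.1 < p.1+p.2+1 by omega⟩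
      · intro q hq
        rw [Finset.mem_sigma, Finset.mem_range, Finset.mem_range] at hq
        rw [Finset.mem_filter, Finset.mem_product, Finset.mem_range, Finset.mem_range]
        refine ⟨⟨by omega, by omega⟩, by omega⟩
      · intro p hp
        dsimp only
        rw [Finset.mem_filter, Finset.mem_product, Finset.mem_range, Finset.mem_range] at hp
        have h2' : p.1 + p.2 - p.1 = p.2 := by omega
        rw [h2']
      · rintro ⟨k, i2⟩ hq
        dsimp only
        rw [Finset.mem_sigma, Finset.mem_range, Finset.mem_range] at hq
        have hk : k < L - n + 1 := hq.1
        have hi : i2 < k + 1 := hq.2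
        rw [show i2 + (k - i2) = k by omega]
      · intro p hp
        dsimp only
        rw [Finset.mem_filter, Finset.mem_product, Finset.mem_range, Finset.mem_range] at hp
        rw [show p.1 + p.2 - p.1 = p.2 by omega]
    · rw [Finset.sum_sigma]
      apply Finset.sum_congr rfl
      intro k _
      rw [Finset.mul_sum]
  rw [h2, h5, h4]

end TASEP
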